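/- The quotient of the set of valuations X → Σ by the equivalence relation ∼_C is finite; that is, there are only finitely many representative valuations [v]. -/

import Mathlib

/-- `u ∼_C v`: there is an automorphism (bijection) of the alphabet which is invariant on the
constants `C` and maps `u` to `v` pointwise. -/
def EquivC {X Sig : Type} (C : Finset Sig) (u v : X → Sig) : Prop :=
  ∃ σ : Equiv.Perm Sig, (∀ c ∈ C, σ c = c) ∧ ∀ x, σ (u x) = v x

/-- `[v]`: the `∼_C` equivalence class of the valuation `v`. -/
def eqClass {X Sig : Type} (C : Finset Sig) (v : X → Sig) : Set (X → Sig) :=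
  {u | EquivC C u v}

open Classical in
lemma exists_perm_extend {Sig : Type} [Infinite Sig] (s t : Set Sig)
    (hs : s.Finite) (ht : t.Finite) (e : s ≃ t) :
    ∃ σ : Equiv.Perm Sig, ∀ a : s, σ a = e a := by
  have h1 : (Cardinal.mk ↥sᶜ) = Cardinal.mk Sig :=
    Cardinal.mk_compl_of_infinite s (lt_of_lt_of_le hs.lt_aleph0 (Cardinal.aleph0_le_mk Sig))
  have h2 : (Cardinal.mk ↥tᶜ) = Cardinal.mk Sig :=
    Cardinal.mk_compl_of_infinite t (lt_of_lt_of_le ht.lt_aleph0 (Cardinal.aleph0_le_mk Sig))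
  obtain ⟨e'⟩ : Nonempty (↥sᶜ ≃ ↥tᶜ) := Cardinal.eq.1 (h1.trans h2.symm)
  refine ⟨(Equiv.sumCompl (· ∈ s)).symm.trans ((Equiv.sumCongr e e').trans
    (Equiv.sumCompl (· ∈ t))), ?_⟩
  rintro ⟨a, ha⟩
  rw [Equiv.trans_apply, Equiv.trans_apply, Equiv.sumCompl_symm_apply_of_pos (p := (· ∈ s)) ha]
  rfl

/-- The quotient of the set of valuations `X → Σ` by `∼_C` is finite: there are only
finitely many representative valuations `[v]`. -/
theorem quotient_equivC_finite {X Sig : Type} [Infinite Sig] [Finite X] (C : Finset Sig) :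
    Finite (Quot (fun u v : X → Sig => EquivC C u v)) := by
  classical
  set inv : (X → Sig) → ((X → Option {c // c ∈ C}) × (X → X → Prop)) :=
    fun v => (fun x => if h : v x ∈ C then some ⟨v x, h⟩ else none, fun x y => v x = v y)
    with hinv
  have resp : ∀ u v : X → Sig, EquivC C u v → inv u = inv v := by
    rintro u v ⟨σ, hσC, hσ⟩
    have hmem : ∀ x, u x ∈ C ↔ v x ∈ C := by
      intro x
      constructor
      · intro h; rw [← hσ x, hσC _ h]; exact h
      · intro h
        have : σ (u x) = σ (v x) := by rw [hσ x, hσC _ h]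
        have := σ.injective this
        rwa [this]
    simp only [hinv, Prod.mk.injEq]
    constructor
    · funext x
      by_cases h : u x ∈ C
      · have h' : v x ∈ C := (hmem x).1 h
        have : u x = v x := by rw [← hσ x, hσC _ h]
        simp [h, h', this]
      · have h' : ¬ v x ∈ C := fun hv => h ((hmem x).2 hv)
        simp [h, h']
    · funext x y
      have : (u x = u y) ↔ (v x = v y) := by
        constructor
        · intro h; rw [← hσ x, ← hσ y, h]
        · intro h
          have : σ (u x) = σ (u y) := by rw [hσ x, hσ y, h]
          exact σ.injective this
      exact propext this
  have key : ∀ u v : X → Sig, inv u = inv v → EquivC C u v := by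
    intro u v h
    have h1 : ∀ x, (if h : u x ∈ C then some (⟨u x, h⟩ : {c // c ∈ C}) else none)
        = (if h : v x ∈ C then some ⟨v x, h⟩ else none) := by
      intro x; exact congrFun (congrArg Prod.fst h) x
    have h2 : ∀ x y, (u x = u y) ↔ (v x = v y) := by
      intro x y
      exact iff_of_eq (congrFun (congrFun (congrArg Prod.snd h) x) y)
    have hmem : ∀ x, u x ∈ C ↔ v x ∈ C := by
      intro x
      have := h1 x
      constructor
      · intro hx
        by_cases hv : v x ∈ C
        · exact hv
        · simp [hx, hv] at this
      · intro hv
        by_cases hx : u x ∈ C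
        · exact hx
        · simp [hx, hv] at this
    have hCeq : ∀ x, u x ∈ C → u x = v x := by
      intro x hx
      have hv : v x ∈ C := (hmem x).1 hx
      have := h1 x
      simp [hx, hv] at this
      exact this
    -- the partial map
    set F : Sig → Sig := fun a =>
      if a ∈ C then a else if h : ∃ x, u x = a then v h.choose else a with hF
    have hFC : ∀ a ∈ C, F a = a := by intro a ha; simp [hF, ha]
    have hFu : ∀ x, F (u x) = v x := by
      intro x
      by_cases hx : u x ∈ C
      · rw [hFC _ hx]; exact hCeq x hx
      · have hex : ∃ y, u y = u x := ⟨x, rfl⟩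
        have hspec : u hex.choose = u x := hex.choose_spec
        have : v hex.choose = v x := (h2 _ _).1 hspec
        simp only [hF, hx, if_false, dif_pos hex]
        exact this
    set s : Set Sig := Set.range u ∪ ↑C with hs
    set t : Set Sig := Set.range v ∪ ↑C with ht
    have hsfin : s.Finite := (Set.finite_range u).union C.finite_toSet
    have htfin : t.Finite := (Set.finite_range v).union C.finite_toSet
    have hbij : Set.BijOn F s t := by
      refine ⟨?_, ?_, ?_⟩
      · rintro a (⟨x, rfl⟩ | ha)
        · rw [hFu x]; exact Or.inl ⟨x, rfl⟩
        · rw [hFC _ ha]; exact Or.inr ha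
      · have hFmem : ∀ a ∈ s, (F a ∈ C ↔ a ∈ C) := by
          rintro a (⟨x, rfl⟩ | ha)
          · rw [hFu x]; exact (hmem x).symm
          · rw [hFC _ ha]
        rintro a ha b hb hab
        rcases ha with ⟨x, rfl⟩ | ha <;> rcases hb with ⟨y, rfl⟩ | hb
        · rw [hFu x, hFu y] at hab
          exact (h2 x y).2 hab
        · rw [hFu x, hFC _ hb] at hab
          by_cases hx : u x ∈ C
          · rw [hCeq x hx, hab]
          · exact absurd (hab ▸ hb) (fun hv => hx ((hmem x).2 hv))
        · rw [hFC _ ha, hFu y] at hab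
          by_cases hy : u y ∈ C
          · rw [hab, ← hCeq y hy]
          · exact absurd (hab ▸ ha) (fun hv => hy ((hmem y).2 hv))
        · rwa [hFC _ ha, hFC _ hb] at hab
      · rintro b (⟨x, rfl⟩ | hb)
        · exact ⟨u x, Or.inl ⟨x, rfl⟩, hFu x⟩
        · exact ⟨b, Or.inr hb, hFC _ hb⟩
    obtain ⟨σ, hσ⟩ := exists_perm_extend s t hsfin htfin (hbij.equiv F)
    have hσ' : ∀ a : Sig, ∀ h : a ∈ s, σ a = F a := by
      intro a h
      have := hσ ⟨a, h⟩
      rw [this]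
      rfl
    refine ⟨σ, ?_, ?_⟩
    · intro c hc
      rw [hσ' c (Or.inr hc)]
      exact hFC _ hc
    · intro x
      rw [hσ' (u x) (Or.inl ⟨x, rfl⟩)]
      exact hFu x
  have : Finite ((X → Option {c // c ∈ C}) × (X → X → Prop)) := by infer_instance
  refine Finite.of_injective (Quot.lift inv resp) ?_
  rintro ⟨q1⟩ ⟨q2⟩ h
  exact Quot.sound (key _ _ h)
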